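/- Let Y be a nonnegative random variable with E[Y] = μ > 0, tail function F̄(t) = P(Y > t), and suppose constants λ, c, R > 0 satisfy the net profit condition c > λμ and the Cramér condition λ·E[e^{RY} - 1] = c·R. Then the function H(x) := 1 - (λ/(c - λμ)) ∫₀^∞ (e^{Rz} - 1) F̄(z + x) dz, defined for x ≥ 0, satisfies H(0) = 0, H is nondecreasing, continuous, and lim_{x→∞} H(x) = 1; i.e., H is the distribution function of a probability measure on [0, ∞). -/

import Mathlib

open Real Filter Topology MeasureTheory Set

noncomputable def phiAux (R t : ℝ) : ℝ := (Real.exp (R * max t 0) - 1) / R - max t 0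

lemma intInt_exp (R : ℝ) (hR : 0 < R) (a b : ℝ) :
    ∫ z in a..b, (Real.exp (R * z) - 1) =
      ((Real.exp (R * b) - 1) / R - b) - ((Real.exp (R * a) - 1) / R - a) := by
  have h : ∀ z ∈ Set.uIcc a b, HasDerivAt (fun z => (Real.exp (R * z) - 1) / R - z)
      (Real.exp (R * z) - 1) z := by
    intro z _
    have h1 : HasDerivAt (fun z => Real.exp (R * z)) (Real.exp (R * z) * R) z := by
      simpa using ((hasDerivAt_id z).const_mul R).exp
    have h2 : HasDerivAt (fun z => (Real.exp (R * z) - 1) / R - z)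
        (Real.exp (R * z) * R / R - 1) z :=
      (((h1.sub_const 1).div_const R).sub (hasDerivAt_id z))
    convert h2 using 1
    field_simp
  have hcont : IntervalIntegrable (fun z => Real.exp (R * z) - 1) volume a b :=
    (Continuous.sub (by continuity) continuous_const).intervalIntegrable a b
  rw [intervalIntegral.integral_eq_sub_of_hasDerivAt h hcont]

lemma phiAux_eq (R : ℝ) (hR : 0 < R) (t : ℝ) :
    phiAux R t = ∫ z in (0:ℝ)..(max t 0), (Real.exp (R * z) - 1) := by
  rw [intInt_exp R hR]
  simp [phiAux]

lemma phiAux_nonneg (R : ℝ) (hR : 0 < R) (t : ℝ) : 0 ≤ phiAux R t := by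
  have hm : 0 ≤ max t 0 := le_max_right _ _
  have := Real.add_one_le_exp (R * max t 0)
  have : R * max t 0 ≤ Real.exp (R * max t 0) - 1 := by linarith
  have : max t 0 ≤ (Real.exp (R * max t 0) - 1) / R := (le_div_iff₀ hR).2 (by linarith)
  simp only [phiAux]
  linarith

lemma phiAux_mono (R : ℝ) (hR : 0 < R) : Monotone (phiAux R) := by
  intro a b hab
  rw [phiAux_eq R hR, phiAux_eq R hR]
  have hmax : max a 0 ≤ max b 0 := max_le_max hab le_rfl
  have hcont : ∀ u v : ℝ, IntervalIntegrable (fun z => Real.exp (R * z) - 1) volume u v :=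
    fun u v => (Continuous.sub (by continuity) continuous_const).intervalIntegrable u v
  have := intervalIntegral.integral_add_adjacent_intervals (a := (0:ℝ)) (b := max a 0)
    (c := max b 0) (hcont _ _) (hcont _ _)
  rw [← this]
  have hnn : 0 ≤ ∫ z in (max a 0)..(max b 0), (Real.exp (R * z) - 1) := by
    apply intervalIntegral.integral_nonneg hmax
    intro u hu
    have : 0 ≤ u := le_trans (le_max_right a 0) hu.1
    have : 1 ≤ Real.exp (R * u) := Real.one_le_exp (by positivity)
    linarith
  linarith

lemma phiAux_cont (R : ℝ) : Continuous (phiAux R) := by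
  unfold phiAux; continuity

lemma phiAux_zero (R t : ℝ) (ht : t ≤ 0) : phiAux R t = 0 := by
  simp [phiAux, max_eq_right ht]

lemma phiAux_le (R : ℝ) (hR : 0 < R) (t : ℝ) (ht : 0 ≤ t) :
    phiAux R t ≤ Real.exp (R * t) / R := by
  simp only [phiAux, max_eq_left ht]
  have h1 : 0 < Real.exp (R * t) := Real.exp_pos _
  have : (Real.exp (R * t) - 1) / R ≤ Real.exp (R * t) / R := by
    gcongr
    linarith
  linarith

lemma key_layercake {Ω : Type*} [MeasureSpace Ω] [IsFiniteMeasure (volume : Measure Ω)]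
    (Y : Ω → ℝ) (hYmeas : Measurable Y) (R : ℝ) (hR : 0 < R)
    (Fbar : ℝ → ℝ) (hFbar : ∀ t, Fbar t = ((volume : Measure Ω) {ω | Y ω > t}).toReal)
    (x : ℝ) :
    (∫ z in Ioi (0:ℝ), (Real.exp (R * z) - 1) * Fbar (z + x)) = ∫ ω, phiAux R (Y ω - x) := by
  have hFanti : Antitone Fbar := by
    intro s t hst
    rw [hFbar, hFbar]
    exact ENNReal.toReal_mono (measure_ne_top _ _)
      (measure_mono (fun ω (h : Y ω > t) => lt_of_le_of_lt hst h))
  have hFmeas : Measurable Fbar := hFanti.measurable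
  set f : Ω → ℝ := fun ω => max (Y ω - x) 0 with hf
  have f_mble : Measurable f := (hYmeas.sub_const x).max measurable_const
  have key := lintegral_comp_eq_lintegral_meas_lt_mul (volume : Measure Ω)
    (f := f) (g := fun t => Real.exp (R * t) - 1)
    (Filter.Eventually.of_forall (fun ω => le_max_right _ _)) f_mble.aemeasurable
    (fun t _ => (Continuous.sub (by continuity) continuous_const).intervalIntegrable 0 t)
    ((ae_restrict_iff' measurableSet_Ioi).2 (Filter.Eventually.of_forall (fun t ht => by
      have h1 : (1:ℝ) ≤ Real.exp (R * t) := Real.one_le_exp (by have := (mem_Ioi.mp ht); positivity)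
      linarith)))
  have hmeasφ : Measurable fun ω => phiAux R (Y ω - x) :=
    (phiAux_cont R).measurable.comp (hYmeas.sub_const x)
  have hLHS : ∫ ω, phiAux R (Y ω - x)
      = (∫⁻ ω, ENNReal.ofReal (phiAux R (Y ω - x))).toReal := by
    rw [integral_eq_lintegral_of_nonneg_ae
      (Filter.Eventually.of_forall fun ω => phiAux_nonneg R hR _)
      hmeasφ.aestronglyMeasurable]
  have hRHS : ∫ z in Ioi (0:ℝ), (Real.exp (R * z) - 1) * Fbar (z + x)
      = (∫⁻ z in Ioi (0:ℝ), ENNReal.ofReal ((Real.exp (R * z) - 1) * Fbar (z + x))).toReal := by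
    rw [integral_eq_lintegral_of_nonneg_ae]
    · exact (ae_restrict_iff' measurableSet_Ioi).2 (Filter.Eventually.of_forall fun z hz => by
        have h1 : (1:ℝ) ≤ Real.exp (R * z) := Real.one_le_exp (by have := mem_Ioi.mp hz; positivity)
        have h2 : 0 ≤ Fbar (z + x) := by rw [hFbar]; exact ENNReal.toReal_nonneg
        exact mul_nonneg (by linarith) h2)
    · exact (((Real.continuous_exp.comp (continuous_const.mul continuous_id)).sub
        continuous_const).measurable.mul (hFmeas.comp (measurable_add_const x))).aestronglyMeasurable
  rw [hLHS, hRHS]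
  congr 1
  have e1 : ∫⁻ ω, ENNReal.ofReal (phiAux R (Y ω - x))
      = ∫⁻ ω, ENNReal.ofReal (∫ t in (0:ℝ)..f ω, (Real.exp (R * t) - 1)) := by
    apply lintegral_congr; intro ω; rw [phiAux_eq R hR]
  have e2 : ∫⁻ z in Ioi (0:ℝ), ENNReal.ofReal ((Real.exp (R * z) - 1) * Fbar (z + x))
      = ∫⁻ t in Ioi (0:ℝ), (volume : Measure Ω) {a | t < f a}
          * ENNReal.ofReal (Real.exp (R * t) - 1) := by
    apply lintegral_congr_ae
    refine (ae_restrict_iff' measurableSet_Ioi).2 (Filter.Eventually.of_forall fun t ht => ?_)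
    have ht0 := mem_Ioi.mp ht
    have h1 : (1:ℝ) ≤ Real.exp (R * t) := Real.one_le_exp (by positivity)
    dsimp only
    have hset : {a : Ω | t < f a} = {ω | Y ω > t + x} := by
      ext a; simp only [hf, mem_setOf_eq, lt_max_iff]
      constructor
      · rintro (h | h)
        · linarith
        · linarith
      · intro h; left; linarith
    rw [ENNReal.ofReal_mul (by linarith), hset, hFbar,
      ENNReal.ofReal_toReal (measure_ne_top _ _), mul_comm]
  rw [e2, ← key]
  exact e1.symm


theorem limiting_overshoot_is_distribution
    {Ω : Type*} [MeasureSpace Ω] [IsProbabilityMeasure (volume : Measure Ω)]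
    (Y : Ω → ℝ) (hYmeas : Measurable Y) (hYnonneg : ∀ ω, 0 ≤ Y ω)
    (lam c R μ : ℝ) (hlam : 0 < lam) (hc : 0 < c) (hR : 0 < R)
    (hYint : Integrable Y) (hμ : μ = ∫ ω, Y ω) (hμpos : 0 < μ)
    (hexpint : Integrable (fun ω => Real.exp (R * Y ω)))
    (hcramer : lam * ((∫ ω, Real.exp (R * Y ω)) - 1) = c * R)
    (hnet : lam * μ < c)
    (Fbar : ℝ → ℝ) (hFbar : ∀ t, Fbar t = ((volume : Measure Ω) {ω | Y ω > t}).toReal)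
    (H : ℝ → ℝ)
    (hH : ∀ x, H x = 1 - (lam / (c - lam * μ)) *
        ∫ z in Ioi (0 : ℝ), (Real.exp (R * z) - 1) * Fbar (z + x)) :
    H 0 = 0 ∧ MonotoneOn H (Ici 0) ∧ ContinuousOn H (Ici 0) ∧
      Tendsto H atTop (𝓝 1) := by
  have hcμ : 0 < c - lam * μ := by linarith
  set K := lam / (c - lam * μ) with hK
  have hKpos : 0 < K := div_pos hlam hcμ
  set G : ℝ → ℝ := fun x => ∫ ω, phiAux R (Y ω - x) with hG
  have hHG : ∀ x, H x = 1 - K * G x := by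
    intro x
    rw [hH x, key_layercake Y hYmeas R hR Fbar hFbar x]
  -- integrability
  have hmeasφ : ∀ x : ℝ, Measurable fun ω => phiAux R (Y ω - x) := fun x =>
    (phiAux_cont R).measurable.comp (hYmeas.sub_const x)
  have hφint : ∀ x : ℝ, 0 ≤ x → Integrable (fun ω => phiAux R (Y ω - x)) := by
    intro x hx
    refine Integrable.mono (hexpint.div_const R) (hmeasφ x).aestronglyMeasurable
      (Filter.Eventually.of_forall fun ω => ?_)
    have h0 : 0 ≤ phiAux R (Y ω - x) := phiAux_nonneg R hR _
    have h1 : phiAux R (Y ω - x) ≤ phiAux R (Y ω) := phiAux_mono R hR (by linarith)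
    have h2 : phiAux R (Y ω) ≤ Real.exp (R * Y ω) / R := phiAux_le R hR _ (hYnonneg ω)
    have h3 : 0 < Real.exp (R * Y ω) / R := div_pos (Real.exp_pos _) hR
    rw [Real.norm_eq_abs, Real.norm_eq_abs, abs_of_nonneg h0, abs_of_pos h3]
    linarith
  -- value at 0
  have hG0 : G 0 = c / lam - μ := by
    have e : G 0 = ∫ ω, ((Real.exp (R * Y ω) - 1) / R - Y ω) := by
      apply integral_congr_ae
      refine Filter.Eventually.of_forall fun ω => ?_
      have : max (Y ω - 0) 0 = Y ω := by
        rw [sub_zero]; exact max_eq_left (hYnonneg ω)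
      simp only [phiAux, this]
    have hi1 : Integrable (fun ω => (Real.exp (R * Y ω) - 1) / R) := by
      apply Integrable.div_const
      exact hexpint.sub (integrable_const 1)
    have hi2 : Integrable (fun ω => Real.exp (R * Y ω) - 1) :=
      hexpint.sub (integrable_const 1)
    rw [e, integral_sub hi1 hYint, integral_div, integral_sub hexpint (integrable_const 1)]
    have h1 : ∫ (_ : Ω), (1:ℝ) = 1 := by simp
    rw [h1, ← hμ]
    have hE : (∫ ω, Real.exp (R * Y ω)) - 1 = c * R / lam := by
      field_simp at hcramer ⊢
      linarith [hcramer]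
    rw [hE]
    field_simp
  have h0 : H 0 = 0 := by
    rw [hHG 0, hG0, hK]
    have : c / lam - μ = (c - lam * μ) / lam := by field_simp
    rw [this]
    field_simp
    norm_num
  refine ⟨h0, ?_, ?_, ?_⟩
  · -- monotone
    intro a ha b hb hab
    rw [hHG a, hHG b]
    have hGle : G b ≤ G a := by
      apply integral_mono (hφint b (mem_Ici.mp hb)) (hφint a (mem_Ici.mp ha))
      intro ω
      exact phiAux_mono R hR (by linarith)
    have := mul_le_mul_of_nonneg_left hGle hKpos.le
    linarith
  · -- continuous
    have hGcont : ContinuousOn G (Ici 0) := by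
      intro x₀ hx₀
      have : Tendsto (fun x => ∫ ω, phiAux R (Y ω - x)) (𝓝[Ici 0] x₀)
          (𝓝 (∫ ω, phiAux R (Y ω - x₀))) := by
        apply tendsto_integral_filter_of_dominated_convergence
          (bound := fun ω => Real.exp (R * Y ω) / R)
        · exact Filter.Eventually.of_forall fun x => (hmeasφ x).aestronglyMeasurable
        · filter_upwards [self_mem_nhdsWithin] with x hx
          refine Filter.Eventually.of_forall fun ω => ?_
          have h0 : 0 ≤ phiAux R (Y ω - x) := phiAux_nonneg R hR _
          have h1 : phiAux R (Y ω - x) ≤ phiAux R (Y ω) :=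
            phiAux_mono R hR (by have := mem_Ici.mp hx; linarith)
          have h2 : phiAux R (Y ω) ≤ Real.exp (R * Y ω) / R := phiAux_le R hR _ (hYnonneg ω)
          rw [Real.norm_eq_abs, abs_of_nonneg h0]
          linarith
        · exact hexpint.div_const R
        · refine Filter.Eventually.of_forall fun ω => ?_
          have : Tendsto (fun x : ℝ => Y ω - x) (𝓝[Ici 0] x₀) (𝓝 (Y ω - x₀)) :=
            ((continuous_const.sub continuous_id).tendsto x₀).mono_left nhdsWithin_le_nhds
          exact ((phiAux_cont R).tendsto _).comp this
      exact this
    have : ContinuousOn (fun x => 1 - K * G x) (Ici 0) :=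
      continuousOn_const.sub (continuousOn_const.mul hGcont)
    exact this.congr fun x _ => hHG x
  · -- tendsto
    have hGtend : Tendsto G atTop (𝓝 0) := by
      have : Tendsto (fun x => ∫ ω, phiAux R (Y ω - x)) atTop (𝓝 (∫ (_ : Ω), (0:ℝ))) := by
        apply tendsto_integral_filter_of_dominated_convergence
          (bound := fun ω => Real.exp (R * Y ω) / R)
        · exact Filter.Eventually.of_forall fun x => (hmeasφ x).aestronglyMeasurable
        · filter_upwards [eventually_ge_atTop (0:ℝ)] with x hx
          refine Filter.Eventually.of_forall fun ω => ?_
          have h0 : 0 ≤ phiAux R (Y ω - x) := phiAux_nonneg R hR _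
          have h1 : phiAux R (Y ω - x) ≤ phiAux R (Y ω) := phiAux_mono R hR (by linarith)
          have h2 : phiAux R (Y ω) ≤ Real.exp (R * Y ω) / R := phiAux_le R hR _ (hYnonneg ω)
          rw [Real.norm_eq_abs, abs_of_nonneg h0]
          linarith
        · exact hexpint.div_const R
        · refine Filter.Eventually.of_forall fun ω => ?_
          apply Tendsto.congr' (f₁ := fun _ => (0:ℝ))
          · filter_upwards [eventually_ge_atTop (Y ω)] with x hx
            exact (phiAux_zero R (Y ω - x) (by linarith)).symm
          · exact tendsto_const_nhds
      simpa using this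
    have : Tendsto (fun x => 1 - K * G x) atTop (𝓝 (1 - K * 0)) :=
      (tendsto_const_nhds.sub ((tendsto_const_nhds).mul hGtend))
    rw [mul_zero, sub_zero] at this
    exact this.congr fun x => (hHG x).symm
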